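/- If Δ > 0 with roots ordered so u* is the largest root, i.e. 0 < u*_- < u*_+ < u*, then at u*_- the quantity (u*_-)^2(2u*_- - T) - AM equals u*_- √Δ (u* - u*_-) which is strictly positive; hence the smallest of three distinct positive roots never yields a saddle (negative-determinant) equilibrium. -/
import Mathlib


/-- if instead u* is the largest root, 0 < u*_- < u*_+ < u* < 1, then
(u*_-)²(2u*_- - T) - AM = u*_- √Δ (u* - u*_-) > 0. -/
theorem stmt_17 (T L A M ustar : ℝ) (hA : 0 < A) (hM : M < 0)
    (hroot : ustar ^ 3 - T * ustar ^ 2 - L * ustar + A * M = 0)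
    (Δ : ℝ) (hΔdef : Δ = (ustar - T) ^ 2 - 4 * (ustar * (ustar - T) - L)) (hΔ : 0 < Δ)
    (um up : ℝ)
    (hum : um = (T - ustar - Real.sqrt Δ) / 2)
    (hup : up = (T - ustar + Real.sqrt Δ) / 2)
    (h0 : 0 < um) (h1 : um < up) (h2 : up < ustar) (h3 : ustar < 1) :
    um ^ 2 * (2 * um - T) - A * M = um * Real.sqrt Δ * (ustar - um) ∧
    0 < um ^ 2 * (2 * um - T) - A * M := by
  have hs : 0 < Real.sqrt Δ := Real.sqrt_pos.mpr hΔ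
  have hs2 : Real.sqrt Δ ^ 2 = Δ := Real.sq_sqrt hΔ.le
  have hs2' : Real.sqrt Δ ^ 2 = (ustar - T) ^ 2 - 4 * (ustar * (ustar - T) - L) := by
    rw [hs2, hΔdef]
  have heq : um ^ 2 * (2 * um - T) - A * M = um * Real.sqrt Δ * (ustar - um) := by
    subst hum
    linear_combination (ustar / 4) * hs2' - hroot
  refine ⟨heq, ?_⟩
  rw [heq]
  have h4 : 0 < ustar - um := by linarith
  exact mul_pos (mul_pos h0 hs) h4
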